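/- Let G be a connected graph with terminals R = \{v_0, ..., v_\alpha\} where each v_i (1 \le i \le \alpha - 1) is a cutvertex separating v_0 from v_\alpha, and suppose the ordering v_0, v_1, ..., v_\alpha is such that every v_0–v_\alpha path visits the terminals in this order. Then every connected component of G - R has neighbors among at most two terminals, and if it has exactly two, they are consecutive in the ordering (v_{i-1} and v_i for some i). -/

import Mathlib

open SimpleGraph List

/-- A walk whose support lies in `s` gives reachability in the induced graph. -/
lemma reach_induce_aux {V : Type*} {G : SimpleGraph V} {s : Set V} :
    ∀ {a b : V} (p : G.Walk a b), (∀ x ∈ p.support, x ∈ s) →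
    ∀ (ha : a ∈ s) (hb : b ∈ s), (G.induce s).Reachable ⟨a, ha⟩ ⟨b, hb⟩ := by
  intro a b p
  induction p with
  | nil => intro _ ha hb; rfl
  | @cons a c b h q ih =>
    intro hs ha hb
    have hc : c ∈ s := hs c (by simp)
    have hadj : (G.induce s).Adj ⟨a, ha⟩ ⟨c, hc⟩ := h
    exact hadj.reachable.trans (ih (fun x hx => hs x (by simp [hx])) hc hb)

/-- Mapping a walk in the induced graph down to `G`. -/
def inducedWalkDown {V : Type*} {G : SimpleGraph V} {s : Set V} :
    ∀ {a b : s}, (G.induce s).Walk a b → G.Walk (a : V) (b : V)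
  | _, _, SimpleGraph.Walk.nil => SimpleGraph.Walk.nil
  | _, _, SimpleGraph.Walk.cons h q => SimpleGraph.Walk.cons h (inducedWalkDown q)

lemma inducedWalkDown_support {V : Type*} {G : SimpleGraph V} {s : Set V} :
    ∀ {a b : s} (p : (G.induce s).Walk a b),
      ∀ x ∈ (inducedWalkDown p).support, x ∈ s := by
  intro a b p
  induction p with
  | nil =>
    intro x hx
    simp only [inducedWalkDown, SimpleGraph.Walk.support_nil, List.mem_singleton] at hx
    subst hx
    exact Subtype.coe_prop _
  | @cons a c b h q ih =>
    intro x hx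
    simp only [inducedWalkDown, SimpleGraph.Walk.support_cons, List.mem_cons] at hx
    change x ∈ (a : V) :: (inducedWalkDown q).support at hx
    rw [List.mem_cons] at hx
    rcases hx with rfl | hx
    · exact Subtype.coe_prop _
    · exact ih x hx

/-- In a path, any vertex on the initial segment up to `u` (other than `u`) occurs
strictly before `u`. -/
lemma indexOf_lt_of_mem_takeUntil {V : Type*} [DecidableEq V] {G : SimpleGraph V}
    {a b u x : V} (p : G.Walk a b) (hp : p.IsPath) (hu : u ∈ p.support)
    (hx : x ∈ (p.takeUntil u hu).support) (hne : x ≠ u) :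
    List.idxOf x p.support < List.idxOf u p.support := by
  have hspec : (p.takeUntil u hu).support ++ (p.dropUntil u hu).support.tail = p.support := by
    rw [← SimpleGraph.Walk.support_append, SimpleGraph.Walk.take_spec]
  have hnodup : ((p.takeUntil u hu).support ++ (p.dropUntil u hu).support.tail).Nodup := by
    rw [hspec]; exact hp.support_nodup
  have htn := hnodup.of_append_left
  have hnonnil : (p.takeUntil u hu).support ≠ [] := SimpleGraph.Walk.support_ne_nil _
  have hlast : (p.takeUntil u hu).support.getLast hnonnil = u :=
    SimpleGraph.Walk.getLast_support _
  have htd : (p.takeUntil u hu).support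
      = (p.takeUntil u hu).support.dropLast ++ [u] := by
    conv_lhs => rw [← List.dropLast_append_getLast hnonnil]
    rw [hlast]
  have hunotin : u ∉ (p.takeUntil u hu).support.dropLast := by
    intro hmem
    have htn' := htn
    rw [htd] at htn'
    exact (List.disjoint_of_nodup_append htn') hmem (by simp)
  have hxmem : x ∈ (p.takeUntil u hu).support.dropLast := by
    have hx' := hx
    rw [htd] at hx'
    rcases List.mem_append.mp hx' with h | h
    · exact h
    · simp at h; exact absurd h hne
  have humem : u ∈ (p.takeUntil u hu).support :=
    SimpleGraph.Walk.end_mem_support (p.takeUntil u hu)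
  rw [← hspec, List.idxOf_append_of_mem hx, List.idxOf_append_of_mem humem]
  rw [htd, List.idxOf_append_of_mem hxmem, List.idxOf_append_of_notMem hunotin]
  have := List.idxOf_lt_length_iff.mpr hxmem
  omega

/-- In a path, any vertex on the final segment from `u` (other than `u`) occurs
strictly after `u`. -/
lemma indexOf_gt_of_mem_dropUntil {V : Type*} [DecidableEq V] {G : SimpleGraph V}
    {a b u x : V} (p : G.Walk a b) (hp : p.IsPath) (hu : u ∈ p.support)
    (hx : x ∈ (p.dropUntil u hu).support) (hne : x ≠ u) :
    List.idxOf u p.support < List.idxOf x p.support := by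
  have hspec : (p.takeUntil u hu).support ++ (p.dropUntil u hu).support.tail = p.support := by
    rw [← SimpleGraph.Walk.support_append, SimpleGraph.Walk.take_spec]
  have hnodup : ((p.takeUntil u hu).support ++ (p.dropUntil u hu).support.tail).Nodup := by
    rw [hspec]; exact hp.support_nodup
  have hdc : (p.dropUntil u hu).support = u :: (p.dropUntil u hu).support.tail :=
    SimpleGraph.Walk.support_eq_cons _
  have hxtail : x ∈ (p.dropUntil u hu).support.tail := by
    have hx' := hx
    rw [hdc] at hx'
    rcases List.mem_cons.mp hx' with h | h
    · exact absurd h hne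
    · exact h
  have hxnott : x ∉ (p.takeUntil u hu).support := fun hmem =>
    (List.disjoint_of_nodup_append hnodup) hmem hxtail
  have hut : u ∈ (p.takeUntil u hu).support :=
    SimpleGraph.Walk.end_mem_support (p.takeUntil u hu)
  rw [← hspec, List.idxOf_append_of_mem hut, List.idxOf_append_of_notMem hxnott]
  have := List.idxOf_lt_length_iff.mpr hut
  omega

/-- Suppose the terminals `v₀, …, v_α` are such that every intermediate one is a
cutvertex separating `v₀` from `v_α`, and every `v₀`–`v_α` path visits them in the
order `v₀, v₁, …, v_α`. Then every connected component of `G - R` attaches to at most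
two terminals, and any two terminals it attaches to are consecutive. -/
theorem component_attaches_consecutive {V : Type*} [Fintype V] [DecidableEq V]
    (G : SimpleGraph V) (hG : G.Connected)
    (α : ℕ) (vs : Fin (α + 1) → V) (hinj : Function.Injective vs)
    (R : Set V) (hR : R = Set.range vs)
    (hsep : ∀ i : Fin (α + 1), 0 < i.val → i.val < α →
      ∀ (h0 : vs 0 ∈ {x | x ≠ vs i}) (hα : vs (Fin.last α) ∈ {x | x ≠ vs i}),
        ¬ (G.induce {x | x ≠ vs i}).Reachable ⟨vs 0, h0⟩ ⟨vs (Fin.last α), hα⟩)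
    (horder : ∀ (p : G.Walk (vs 0) (vs (Fin.last α))), p.IsPath →
      ∀ i j : Fin (α + 1), i ≤ j →
        List.idxOf (vs i) p.support ≤ List.idxOf (vs j) p.support) :
    ∀ (c0 : V) (hc0 : c0 ∉ R) (i j : Fin (α + 1)),
      (∃ x, ∃ hx : x ∉ R,
        (G.induce {y | y ∉ R}).Reachable ⟨c0, hc0⟩ ⟨x, hx⟩ ∧ G.Adj x (vs i)) →
      (∃ x, ∃ hx : x ∉ R,
        (G.induce {y | y ∉ R}).Reachable ⟨c0, hc0⟩ ⟨x, hx⟩ ∧ G.Adj x (vs j)) →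
      i = j ∨ i.val + 1 = j.val ∨ j.val + 1 = i.val := by
  -- Main claim: cannot attach to two terminals which are at distance ≥ 2 in the order.
  have main : ∀ (c0 : V) (hc0 : c0 ∉ R) (i j : Fin (α + 1)), i.val + 1 < j.val →
      (∃ x, ∃ hx : x ∉ R,
        (G.induce {y | y ∉ R}).Reachable ⟨c0, hc0⟩ ⟨x, hx⟩ ∧ G.Adj x (vs i)) →
      (∃ x, ∃ hx : x ∉ R,
        (G.induce {y | y ∉ R}).Reachable ⟨c0, hc0⟩ ⟨x, hx⟩ ∧ G.Adj x (vs j)) →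
      False := by
    intro c0 hc0 i j hij hex1 hex2
    obtain ⟨x, hx, hrx, hadx⟩ := hex1
    obtain ⟨y, hy, hry, hady⟩ := hex2
    have hjα : j.val ≤ α := Nat.lt_succ_iff.mp j.isLt
    -- a walk from x to y inside G - R
    obtain ⟨w⟩ := hrx.symm.trans hry
    have hWsupp : ∀ z ∈ (inducedWalkDown w).support, z ∉ R :=
      fun z hz => inducedWalkDown_support w z hz
    -- a v₀–v_α path
    obtain ⟨w0⟩ := hG.preconnected (vs 0) (vs (Fin.last α))
    set p : G.Walk (vs 0) (vs (Fin.last α)) := w0.toPath.val with hp0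
    have hp : p.IsPath := w0.toPath.property
    -- every intermediate terminal is on p
    have hmem : ∀ m : Fin (α + 1), 0 < m.val → m.val < α → vs m ∈ p.support := by
      intro m hm1 hm2
      by_contra hmemc
      have h0 : vs 0 ∈ {z | z ≠ vs m} := by
        intro h
        have := congrArg Fin.val (hinj h)
        simp only [Fin.val_zero] at this
        omega
      have hα : vs (Fin.last α) ∈ {z | z ≠ vs m} := by
        intro h
        have := congrArg Fin.val (hinj h)
        simp only [Fin.val_last] at this
        omega
      exact hsep m hm1 hm2 h0 hα
        (reach_induce_aux p (by intro z hz; simp only [Set.mem_setOf_eq]; intro he; exact hmemc (he ▸ hz)) h0 hα)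
    have hiα : i.val < α := by omega
    have hvi : vs i ∈ p.support := by
      rcases Nat.eq_zero_or_pos i.val with h | h
      · have hi0 : i = 0 := Fin.ext (by simp [h])
        rw [hi0]
        exact p.start_mem_support
      · exact hmem i h hiα
    have hvj : vs j ∈ p.support := by
      rcases Nat.lt_or_ge j.val α with h | h
      · exact hmem j (by omega) h
      · have hjl : j = Fin.last α := Fin.ext (by simp only [Fin.val_last]; omega)
        rw [hjl]
        exact p.end_mem_support
    -- the intermediate terminal v_k with k = i + 1
    set k : Fin (α + 1) := ⟨i.val + 1, by omega⟩ with hk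
    have hik : i ≤ k := by rw [Fin.le_def]; simp [hk]
    have hkj : k ≤ j := by rw [Fin.le_def]; simp only [hk]; omega
    have hvkR : vs k ∈ R := hR ▸ Set.mem_range_self k
    have hikne : vs i ≠ vs k := by
      intro h
      have := congrArg Fin.val (hinj h)
      simp only [hk] at this
      omega
    have hjkne : vs j ≠ vs k := by
      intro h
      have := congrArg Fin.val (hinj h)
      simp only [hk] at this
      omega
    -- the full walk from v₀ to v_α avoiding v_k
    set mid : G.Walk (vs i) (vs j) :=
      SimpleGraph.Walk.cons hadx.symm ((inducedWalkDown w).concat hady) with hmid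
    set Wfull : G.Walk (vs 0) (vs (Fin.last α)) :=
      (p.takeUntil (vs i) hvi).append (mid.append (p.dropUntil (vs j) hvj)) with hfull
    have hsupp : ∀ z ∈ Wfull.support, z ∈ {z | z ≠ vs k} := by
      intro z hz hzk
      subst hzk
      rw [hfull, SimpleGraph.Walk.support_append] at hz
      rcases List.mem_append.mp hz with h | h
      · have hlt := indexOf_lt_of_mem_takeUntil p hp hvi h hikne.symm
        have hle := horder p hp i k hik
        omega
      · have h' : vs k ∈ (mid.append (p.dropUntil (vs j) hvj)).support :=
          List.mem_of_mem_tail h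
        rw [SimpleGraph.Walk.support_append] at h'
        rcases List.mem_append.mp h' with h2 | h2
        · rw [hmid, SimpleGraph.Walk.support_cons, SimpleGraph.Walk.support_concat] at h2
          rcases List.mem_cons.mp h2 with h3 | h3
          · exact hikne h3.symm
          · rw [List.mem_append, List.mem_singleton] at h3
            rcases h3 with h4 | h4
            · exact hWsupp _ h4 hvkR
            · exact hjkne (by rw [h4])
        · have h3 : vs k ∈ (p.dropUntil (vs j) hvj).support :=
            List.mem_of_mem_tail h2
          have hlt := indexOf_gt_of_mem_dropUntil p hp hvj h3 hjkne.symm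
          have hle := horder p hp k j hkj
          omega
    have h0m : vs 0 ∈ {z | z ≠ vs k} := hsupp _ Wfull.start_mem_support
    have hαm : vs (Fin.last α) ∈ {z | z ≠ vs k} := hsupp _ Wfull.end_mem_support
    exact hsep k (by simp [hk]) (by simp only [hk]; omega) h0m hαm
      (reach_induce_aux Wfull hsupp h0m hαm)
  intro c0 hc0 i j h1 h2
  by_contra hcon
  push_neg at hcon
  obtain ⟨hne, hne1, hne2⟩ := hcon
  have hvalne : i.val ≠ j.val := fun h => hne (Fin.ext h)
  rcases Nat.lt_or_ge i.val j.val with h | h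
  · exact main c0 hc0 i j (by omega) h1 h2
  · exact main c0 hc0 j i (by omega) h2 h1
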